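/- Let θ > 0 and let g(x,n) = n·((R₁-T₁)x + (S₁-P₁)(1-x)) + (1-n)·((R₀-T₀)x + (S₀-P₀)(1-x)). Define F(x,n) = (x(1-x)·g(x,n), n(1-n)·(-1+(1+θ)x)) and G(x,n) = (x²(1-x)(1-n), 0). Then for every (x,n) ∈ (0,1)², the two vectors G(x,n) and [F,G](x,n) = (DG)F(x,n) − (DF)G(x,n) are linearly independent in ℝ². -/

import Mathlib

/-- At every interior point (x,n) ∈ (0,1)², the control vector field G(x,n)
and the Lie bracket [F,G](x,n) = (DG)F − (DF)G are linearly independent in ℝ². -/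
theorem G_and_lie_bracket_linearly_independent
    (θ R₀ S₀ T₀ P₀ R₁ S₁ T₁ P₁ : ℝ) (hθ : 0 < θ)
    (g : ℝ × ℝ → ℝ)
    (hg : ∀ x n : ℝ, g (x, n)
      = n * ((R₁ - T₁) * x + (S₁ - P₁) * (1 - x))
        + (1 - n) * ((R₀ - T₀) * x + (S₀ - P₀) * (1 - x)))
    (F G : ℝ × ℝ → ℝ × ℝ)
    (hF : ∀ x n : ℝ, F (x, n)
      = (x * (1 - x) * g (x, n), n * (1 - n) * (-1 + (1 + θ) * x)))
    (hG : ∀ x n : ℝ, G (x, n) = (x ^ 2 * (1 - x) * (1 - n), 0))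
    (bracket : ℝ × ℝ → ℝ × ℝ)
    (hbracket : ∀ p : ℝ × ℝ, bracket p = fderiv ℝ G p (F p) - fderiv ℝ F p (G p)) :
    ∀ x n : ℝ, x ∈ Set.Ioo (0 : ℝ) 1 → n ∈ Set.Ioo (0 : ℝ) 1 →
      LinearIndependent ℝ ![G (x, n), bracket (x, n)] := by
  intro x n hx hn
  obtain ⟨hx0, hx1⟩ := hx
  obtain ⟨hn0, hn1⟩ := hn
  -- explicit polynomial forms of F and G
  set f1 : ℝ × ℝ → ℝ := fun q =>
    q.1 * (1 - q.1) * (q.2 * ((R₁ - T₁) * q.1 + (S₁ - P₁) * (1 - q.1))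
      + (1 - q.2) * ((R₀ - T₀) * q.1 + (S₀ - P₀) * (1 - q.1))) with hf1def
  set f2 : ℝ × ℝ → ℝ := fun q => q.2 * (1 - q.2) * (-1 + (1 + θ) * q.1) with hf2def
  set g1 : ℝ × ℝ → ℝ := fun q => q.1 ^ 2 * (1 - q.1) * (1 - q.2) with hg1def
  have hFe : F = fun q => (f1 q, f2 q) := by
    funext q; obtain ⟨a, b⟩ := q
    rw [hF, hg]
  have hGe : G = fun q => (g1 q, (0:ℝ)) := by
    funext q; obtain ⟨a, b⟩ := q
    rw [hG]
  set p : ℝ × ℝ := (x, n) with hp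
  -- derivative of f2
  have hu : HasFDerivAt (fun q : ℝ × ℝ => q.2 * (1 - q.2))
      (n • (-(ContinuousLinearMap.snd ℝ ℝ ℝ)) + (1 - n) • (ContinuousLinearMap.snd ℝ ℝ ℝ)) p :=
    ((hasFDerivAt_snd : HasFDerivAt Prod.snd (ContinuousLinearMap.snd ℝ ℝ ℝ) p)).mul
      ((hasFDerivAt_snd : HasFDerivAt Prod.snd (ContinuousLinearMap.snd ℝ ℝ ℝ) p).const_sub 1)
  have hv : HasFDerivAt (fun q : ℝ × ℝ => -1 + (1 + θ) * q.1)
      ((1 + θ) • (ContinuousLinearMap.fst ℝ ℝ ℝ)) p :=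
    (((hasFDerivAt_fst : HasFDerivAt Prod.fst (ContinuousLinearMap.fst ℝ ℝ ℝ) p)).const_mul
      (1 + θ)).const_add (-1)
  have hf2 : HasFDerivAt f2
      ((n * (1 - n)) • ((1 + θ) • (ContinuousLinearMap.fst ℝ ℝ ℝ))
        + (-1 + (1 + θ) * x) • (n • (-(ContinuousLinearMap.snd ℝ ℝ ℝ))
            + (1 - n) • (ContinuousLinearMap.snd ℝ ℝ ℝ))) p := hu.mul hv
  -- differentiability of f1 and g1
  have hd1 : DifferentiableAt ℝ f1 p := by rw [hf1def]; fun_prop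
  have hdg1 : DifferentiableAt ℝ g1 p := by rw [hg1def]; fun_prop
  -- full derivatives
  have hFder : HasFDerivAt F ((fderiv ℝ f1 p).prod
      ((n * (1 - n)) • ((1 + θ) • (ContinuousLinearMap.fst ℝ ℝ ℝ))
        + (-1 + (1 + θ) * x) • (n • (-(ContinuousLinearMap.snd ℝ ℝ ℝ))
            + (1 - n) • (ContinuousLinearMap.snd ℝ ℝ ℝ)))) p := by
    rw [hFe]; exact HasFDerivAt.prodMk (hd1.hasFDerivAt) hf2
  have hGder : HasFDerivAt G ((fderiv ℝ g1 p).prod (0 : ℝ × ℝ →L[ℝ] ℝ)) p := by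
    rw [hGe]; exact HasFDerivAt.prodMk (hdg1.hasFDerivAt) (hasFDerivAt_const 0 p)
  set c : ℝ := x ^ 2 * (1 - x) * (1 - n) with hc
  have hcpos : 0 < c := by
    have : (0:ℝ) < x ^ 2 := by positivity
    have h1 : (0:ℝ) < 1 - x := by linarith
    have h2 : (0:ℝ) < 1 - n := by linarith
    positivity
  have hGval : G (x, n) = (c, 0) := hG x n
  -- the second component of bracket (x,n)
  have hb2 : (bracket (x, n)).2 = -(n * (1 - n) * (1 + θ) * c) := by
    rw [hbracket, hGder.fderiv, hFder.fderiv, hGval]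
    simp [ContinuousLinearMap.prod_apply]
    ring
  have hb2ne : (bracket (x, n)).2 ≠ 0 := by
    rw [hb2]
    have h1 : (0:ℝ) < n * (1 - n) * (1 + θ) * c := by
      have : (0:ℝ) < 1 - n := by linarith
      have : (0:ℝ) < 1 + θ := by linarith
      positivity
    linarith
  rw [LinearIndependent.pair_iff]
  intro s t hst
  have h2 : s * (G (x, n)).2 + t * (bracket (x, n)).2 = 0 := congrArg Prod.snd hst
  have h1 : s * (G (x, n)).1 + t * (bracket (x, n)).1 = 0 := congrArg Prod.fst hst
  rw [hGval] at h1 h2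
  simp at h1 h2
  have ht : t = 0 := by
    rcases h2 with h | h
    · exact h
    · exact absurd h hb2ne
  subst ht
  simp at h1
  rcases h1 with h | h
  · exact ⟨h, rfl⟩
  · exact absurd h (ne_of_gt hcpos)
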